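/- There is no unitary matrix V of odd dimension n such that V = W/√2^q for some matrix W with integer entries and some odd natural number q. -/

import Mathlib

open Matrix Complex

/-- There is no unitary matrix of odd dimension `n` of the form `W/√2^q` with
`W` an integer matrix and `q` odd. -/
theorem stmt11 (n : ℕ) (hn : Odd n) (V : Matrix (Fin n) (Fin n) ℂ)
    (hV : V ∈ Matrix.unitaryGroup (Fin n) ℂ) :
    ¬ ∃ (W : Matrix (Fin n) (Fin n) ℤ) (q : ℕ), Odd q ∧
        ∀ j k, V j k = (W j k : ℂ) / (Real.sqrt 2 : ℂ) ^ q := by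
  rintro ⟨W, q, hq, h⟩
  set s : ℝ := Real.sqrt 2 with hs
  have hs0 : (0:ℝ) < s := Real.sqrt_pos.2 (by norm_num)
  have hVeq : V = (((s : ℂ)) ^ q)⁻¹ • (W.map (Int.cast : ℤ → ℂ)) := by
    ext j k
    simp [h j k, Matrix.map_apply, div_eq_inv_mul]
  have hdet : V.det = (((s : ℂ)) ^ q)⁻¹ ^ n * ((W.det : ℤ) : ℂ) := by
    rw [hVeq, Matrix.det_smul, Fintype.card_fin]
    congr 1
    exact (RingHom.map_det (Int.castRingHom ℂ) W).symm
  have hz := (Unitary.mem_iff.mp (Matrix.det_of_mem_unitary hV)).1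
  have habs : ‖V.det‖ = 1 := by
    have h1 : ‖star V.det * V.det‖ = 1 := by rw [hz]; simp
    rw [norm_mul] at h1
    simp only [Complex.norm_conj, RCLike.star_def] at h1
    nlinarith [norm_nonneg V.det]
  have hreal : |(W.det : ℝ)| = s ^ (q * n) := by
    have h2 : ‖V.det‖ = (s ^ (q*n))⁻¹ * |(W.det : ℝ)| := by
      rw [hdet, norm_mul]
      have : ‖((s : ℂ) ^ q)⁻¹ ^ n‖ = (s ^ (q*n))⁻¹ := by
        rw [norm_pow, norm_inv, norm_pow, Complex.norm_real, Real.norm_eq_abs, _root_.abs_of_nonneg hs0.le,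
          ← inv_pow, ← pow_mul, inv_pow]
      rw [this]
      congr 1
      exact Complex.norm_intCast _
    rw [habs] at h2
    field_simp at h2
    linarith [h2]
  have hsq : (W.det : ℝ) ^ 2 = 2 ^ (q * n) := by
    have := congrArg (· ^ 2) hreal
    simp only [← pow_mul] at this
    calc (W.det : ℝ) ^ 2 = |(W.det : ℝ)| ^ 2 := (_root_.sq_abs _).symm
      _ = (s ^ 2) ^ (q*n) := by rw [hreal, ← pow_mul, mul_comm (q*n) 2, pow_mul]
      _ = 2 ^ (q*n) := by rw [hs, Real.sq_sqrt (by norm_num : (2:ℝ) ≥ 0)]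
  have hint : W.det ^ 2 = 2 ^ (q * n) := by exact_mod_cast hsq
  have hnat : W.det.natAbs ^ 2 = 2 ^ (q * n) := by
    have := congrArg Int.natAbs hint
    simpa [Int.natAbs_pow] using this
  have hfac := congrArg (fun f => f 2) (congrArg Nat.factorization hnat)
  simp [Nat.factorization_pow, Nat.Prime.factorization Nat.prime_two] at hfac
  have hodd : Odd (q * n) := hq.mul hn
  rw [Nat.odd_iff] at hodd
  omega
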